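/- Decomposition of the cross term into intra- and intersystem coherence contributions. Let qubits A_m, A_k, B_l have pair interactions H_{ml} = c_{ml}σ^−_{A_m}σ^+_{B_l} + h.c. and H_{kl} = c_{kl}σ^−_{A_k}σ^+_{B_l} + h.c. (m ≠ k), and suppose the reduced state of ρ on the triple decomposes as ρ_{A_mA_kB_l} = ρ_{A_mA_k} ⊗ ρ_{B_l} + Σ_{a∈{x,y,z}} χ^a_A ⊗ σ^a_{B_l}, where ρ_{B_l} = e^{β_{B_l}ω_{B_l}σ^z/2}/(2cosh(β_{B_l}ω_{B_l}/2)) is a Gibbs state, ρ_{A_mA_k} is the reduced state on {A_m, A_k}, and tr(χ^a_A) = 0. Then −tr( ρ [H_{ml}, [H_{kl}, H_{B0}]] ) = ω_{B_l} [ tanh(β_{B_l}ω_{B_l}/2) · tr( ρ_{A_mA_k}( c_{ml}c̄_{kl} σ^−_{A_m}σ^+_{A_k} + h.c. ) ) + 2 tr( χ^z_A ( c_{ml}c̄_{kl} σ^−_{A_m}σ^+_{A_k} + h.c. ) ) ], where H_{B0} contains the term −(ω_{B_l}/2)σ^z_{B_l}. -/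

import Mathlib

open Matrix Kronecker Complex
open scoped ComplexOrder

noncomputable section

/-- Pauli X. -/
def σx : Matrix (Fin 2) (Fin 2) ℂ := !![0, 1; 1, 0]
/-- Pauli Y. -/
def σy : Matrix (Fin 2) (Fin 2) ℂ := !![0, -I; I, 0]
/-- Pauli Z. -/
def σz : Matrix (Fin 2) (Fin 2) ℂ := !![1, 0; 0, -1]
/-- Raising operator `σ⁺ = (σˣ + iσʸ)/2`. -/
def σp : Matrix (Fin 2) (Fin 2) ℂ := !![0, 1; 0, 0]
/-- Lowering operator `σ⁻ = (σˣ - iσʸ)/2`. -/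
def σm : Matrix (Fin 2) (Fin 2) ℂ := !![0, 0; 1, 0]

/-- Tensor product of a family of single-qubit operators, as a matrix on `⊗_{i : ι} ℂ²`. -/
def tpow {ι : Type*} [Fintype ι] (M : ι → Matrix (Fin 2) (Fin 2) ℂ) :
    Matrix (ι → Fin 2) (ι → Fin 2) ℂ :=
  Matrix.of fun f g => ∏ i, M i (f i) (g i)

/-- The single-qubit operator `M` acting on qubit `u`, tensored with the identity elsewhere. -/
def opAt {ι : Type*} [Fintype ι] [DecidableEq ι] (u : ι) (M : Matrix (Fin 2) (Fin 2) ℂ) :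
    Matrix (ι → Fin 2) (ι → Fin 2) ℂ :=
  tpow fun i => if i = u then M else 1

/-- The single-qubit Gibbs state `e^{βωσᶻ/2}/(2cosh(βω/2))` of the Hamiltonian `-(ω/2)σᶻ`
at inverse temperature `β`. -/
def gibbsQubit (β ω : ℝ) : Matrix (Fin 2) (Fin 2) ℂ :=
  ((2 * Real.cosh (β * ω / 2) : ℝ) : ℂ)⁻¹ •
    !![(Real.exp (β * ω / 2) : ℂ), 0; 0, (Real.exp (-(β * ω) / 2) : ℂ)]

/-- Reduced density matrix of a multi-qubit state on the single qubit `u`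
(partial trace over all other qubits). -/
def rdm1 {ι : Type*} [Fintype ι] [DecidableEq ι] (u : ι)
    (ρ : Matrix (ι → Fin 2) (ι → Fin 2) ℂ) : Matrix (Fin 2) (Fin 2) ℂ :=
  Matrix.of fun a b => ∑ g : ι → Fin 2, if g u = a then ρ g (Function.update g u b) else 0

/-- Reduced density matrix of a multi-qubit state on the (distinct) pair of qubits `u, v`
(partial trace over all other qubits). -/
def rdm2 {ι : Type*} [Fintype ι] [DecidableEq ι] (u v : ι)
    (ρ : Matrix (ι → Fin 2) (ι → Fin 2) ℂ) : Matrix (Fin 2 × Fin 2) (Fin 2 × Fin 2) ℂ :=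
  Matrix.of fun p q => ∑ g : ι → Fin 2,
    if g u = p.1 ∧ g v = p.2 then
      ρ g (Function.update (Function.update g u q.1) v q.2) else 0

/-- Reduced density matrix of a multi-qubit state on the (distinct) triple of qubits `u, v, w`
(partial trace over all other qubits). -/
def rdm3 {ι : Type*} [Fintype ι] [DecidableEq ι] (u v w : ι)
    (ρ : Matrix (ι → Fin 2) (ι → Fin 2) ℂ) :
    Matrix ((Fin 2 × Fin 2) × Fin 2) ((Fin 2 × Fin 2) × Fin 2) ℂ :=
  Matrix.of fun p q => ∑ g : ι → Fin 2,
    if g u = p.1.1 ∧ g v = p.1.2 ∧ g w = p.2 then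
      ρ g (Function.update (Function.update (Function.update g u q.1.1) v q.1.2) w q.2) else 0

/-- Unitary (Schrödinger) evolution `ρ(t) = e^{-iHt} ρ e^{iHt}` (with `ħ = 1`). -/
def evolve {n : Type*} [Fintype n] [DecidableEq n] (H ρ : Matrix n n ℂ) (t : ℝ) :
    Matrix n n ℂ :=
  NormedSpace.exp ((-(I * t)) • H) * ρ * NormedSpace.exp ((I * t) • H)

variable {ι : Type*} [Fintype ι] [DecidableEq ι]

lemma tpow_mul (M N : ι → Matrix (Fin 2) (Fin 2) ℂ) :
    tpow M * tpow N = tpow (fun i => M i * N i) := by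
  ext f g
  simp only [Matrix.mul_apply, tpow, Matrix.of_apply]
  rw [Finset.prod_univ_sum (fun _ => (Finset.univ : Finset (Fin 2)))
    (fun i x => M i (f i) x * N i x (g i))]
  rw [Fintype.piFinset_univ]
  exact Finset.sum_congr rfl fun x _ => (Finset.prod_mul_distrib).symm

omit [DecidableEq ι] in
lemma tpow_congr {M N : ι → Matrix (Fin 2) (Fin 2) ℂ} (h : ∀ i, M i = N i) :
    tpow M = tpow N := by
  ext f g; simp only [tpow, Matrix.of_apply]; exact Finset.prod_congr rfl fun i _ => by rw [h i]

lemma opAt_mul_same (u : ι) (M N : Matrix (Fin 2) (Fin 2) ℂ) :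
    opAt u M * opAt u N = opAt u (M * N) := by
  rw [opAt, opAt, tpow_mul]
  exact tpow_congr fun i => by split <;> simp

lemma opAt_comm {u v : ι} (h : u ≠ v) (M N : Matrix (Fin 2) (Fin 2) ℂ) :
    opAt u M * opAt v N = opAt v N * opAt u M := by
  rw [opAt, opAt, tpow_mul, tpow_mul]
  refine tpow_congr fun i => ?_
  rcases eq_or_ne i u with rfl | hu <;> rcases eq_or_ne i v with rfl | hv <;>
    simp_all


lemma opAt_apply (u : ι) (M : Matrix (Fin 2) (Fin 2) ℂ) (f g : ι → Fin 2) :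
    opAt u M f g
      = M (f u) (g u) * ∏ i ∈ Finset.univ.erase u, (1 : Matrix (Fin 2) (Fin 2) ℂ) (f i) (g i) := by
  rw [opAt, tpow, Matrix.of_apply, ← Finset.mul_prod_erase _ _ (Finset.mem_univ u)]
  simp only [if_pos rfl]
  congr 1
  refine Finset.prod_congr rfl fun i hi => ?_
  rw [if_neg (Finset.ne_of_mem_erase hi)]

lemma opAt_add (u : ι) (M N : Matrix (Fin 2) (Fin 2) ℂ) :
    opAt u (M + N) = opAt u M + opAt u N := by
  ext f g; simp [opAt_apply, Matrix.add_apply, add_mul]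

lemma opAt_smul (u : ι) (c : ℂ) (M : Matrix (Fin 2) (Fin 2) ℂ) :
    opAt u (c • M) = c • opAt u M := by
  ext f g; simp [opAt_apply, Matrix.smul_apply, mul_assoc]

lemma opAt_sub (u : ι) (M N : Matrix (Fin 2) (Fin 2) ℂ) :
    opAt u (M - N) = opAt u M - opAt u N := by
  ext f g; simp [opAt_apply, Matrix.sub_apply, sub_mul]

lemma opAt_one (u : ι) : opAt u (1 : Matrix (Fin 2) (Fin 2) ℂ) = 1 := by
  ext f g
  have : opAt u (1 : Matrix (Fin 2) (Fin 2) ℂ) f g = ∏ i, (1 : Matrix (Fin 2) (Fin 2) ℂ) (f i) (g i) := by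
    rw [opAt, tpow, Matrix.of_apply]
    exact Finset.prod_congr rfl fun i _ => by split <;> rfl
  rw [this]
  by_cases h : f = g
  · subst h
    simp [Matrix.one_apply]
  · rw [Matrix.one_apply_ne h]
    obtain ⟨i, hi⟩ := Function.ne_iff.mp h
    exact Finset.prod_eq_zero (Finset.mem_univ i) (Matrix.one_apply_ne hi)



section T3
variable {ι : Type*} [Fintype ι] [DecidableEq ι]

lemma opAt_mul_left_comm {u v : ι} (h : u ≠ v) (M N : Matrix (Fin 2) (Fin 2) ℂ)
    (X : Matrix (ι → Fin 2) (ι → Fin 2) ℂ) :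
    opAt u M * (opAt v N * X) = opAt v N * (opAt u M * X) := by
  rw [← mul_assoc, opAt_comm h, mul_assoc]

lemma opAt_mul_mul_same (u : ι) (M N : Matrix (Fin 2) (Fin 2) ℂ)
    (X : Matrix (ι → Fin 2) (ι → Fin 2) ℂ) :
    opAt u M * (opAt u N * X) = opAt u (M * N) * X := by
  rw [← mul_assoc, opAt_mul_same]

/-- canonical triple product -/
def T3 (u v w : ι) (P Q R : Matrix (Fin 2) (Fin 2) ℂ) :
    Matrix (ι → Fin 2) (ι → Fin 2) ℂ :=
  opAt u P * opAt v Q * opAt w R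

lemma T3_mul {u v w : ι} (huv : u ≠ v) (huw : u ≠ w) (hvw : v ≠ w)
    (P Q R P' Q' R' : Matrix (Fin 2) (Fin 2) ℂ) :
    T3 u v w P Q R * T3 u v w P' Q' R' = T3 u v w (P * P') (Q * Q') (R * R') := by
  simp only [T3, mul_assoc]
  rw [opAt_mul_left_comm huw.symm R P', opAt_mul_left_comm huv.symm Q P',
    opAt_mul_mul_same u P P', opAt_mul_left_comm hvw.symm R Q',
    opAt_mul_mul_same v Q Q', opAt_mul_same w R R']

lemma opAt_commute_T3 {u v w x : ι} (hu : x ≠ u) (hv : x ≠ v) (hw : x ≠ w)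
    (S P Q R : Matrix (Fin 2) (Fin 2) ℂ) :
    T3 u v w P Q R * opAt x S = opAt x S * T3 u v w P Q R := by
  simp only [T3, mul_assoc]
  rw [opAt_comm hw.symm R S, opAt_mul_left_comm hv.symm Q S, opAt_mul_left_comm hu.symm P S]

lemma T3_smul (u v w : ι) (c : ℂ) (P Q R : Matrix (Fin 2) (Fin 2) ℂ) :
    T3 u v w (c • P) Q R = c • T3 u v w P Q R := by
  simp only [T3, opAt_smul, smul_mul_assoc]

lemma T3_smul_right (u v w : ι) (c : ℂ) (P Q R : Matrix (Fin 2) (Fin 2) ℂ) :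
    T3 u v w P Q (c • R) = c • T3 u v w P Q R := by
  simp only [T3, opAt_smul, Matrix.mul_smul]

lemma T3_sub_right (u v w : ι) (P Q R R' : Matrix (Fin 2) (Fin 2) ℂ) :
    T3 u v w P Q (R - R') = T3 u v w P Q R - T3 u v w P Q R' := by
  simp only [T3, opAt_sub, Matrix.mul_sub]

end T3

section TraceLemma
variable {ι : Type*} [Fintype ι] [DecidableEq ι]

lemma T3_eq_tpow {u v w : ι} (huv : u ≠ v) (huw : u ≠ w) (hvw : v ≠ w)
    (P Q R : Matrix (Fin 2) (Fin 2) ℂ) :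
    T3 u v w P Q R
      = tpow (fun i => if i = u then P else if i = v then Q else if i = w then R else 1) := by
  rw [T3, opAt, opAt, opAt, tpow_mul, tpow_mul]
  refine tpow_congr fun i => ?_
  split_ifs <;> simp_all

lemma delta_prod_eq_sum (u v w : ι) (huv : u ≠ v) (huw : u ≠ w) (hvw : v ≠ w)
    (f g : ι → Fin 2) :
    (∏ i ∈ Finset.univ \ ({u, v, w} : Finset ι), if g i = f i then (1 : ℂ) else 0)
      = ∑ q : (Fin 2 × Fin 2) × Fin 2,
          if g = Function.update (Function.update (Function.update f u q.1.1) v q.1.2) w q.2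
          then 1 else 0 := by
  by_cases h : ∀ i, i ≠ u → i ≠ v → i ≠ w → g i = f i
  · have hL : (∏ i ∈ Finset.univ \ ({u, v, w} : Finset ι), if g i = f i then (1 : ℂ) else 0) = 1 := by
      refine Finset.prod_eq_one fun i hi => ?_
      simp only [Finset.mem_sdiff, Finset.mem_insert, Finset.mem_singleton] at hi
      push_neg at hi
      rw [if_pos (h i hi.2.1 hi.2.2.1 hi.2.2.2)]
    have hiff : ∀ q : (Fin 2 × Fin 2) × Fin 2,
        (g = Function.update (Function.update (Function.update f u q.1.1) v q.1.2) w q.2)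
          ↔ q = ((g u, g v), g w) := by
      intro q
      constructor
      · intro hq
        have h1 : g u = q.1.1 := by
          rw [hq, Function.update_of_ne huw, Function.update_of_ne huv,
            Function.update_self]
        have h2 : g v = q.1.2 := by
          rw [hq, Function.update_of_ne hvw, Function.update_self]
        have h3 : g w = q.2 := by rw [hq, Function.update_self]
        simp [h1, h2, h3]
      · rintro rfl
        funext i
        rcases eq_or_ne i w with rfl | hw
        · rw [Function.update_self]
        rcases eq_or_ne i v with rfl | hv
        · rw [Function.update_of_ne hw, Function.update_self]
        rcases eq_or_ne i u with rfl | hu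
        · rw [Function.update_of_ne hw, Function.update_of_ne hv, Function.update_self]
        · rw [Function.update_of_ne hw, Function.update_of_ne hv, Function.update_of_ne hu]
          exact h i hu hv hw
    rw [hL]
    have : (∑ q : (Fin 2 × Fin 2) × Fin 2,
        if g = Function.update (Function.update (Function.update f u q.1.1) v q.1.2) w q.2
        then (1:ℂ) else 0)
        = ∑ q : (Fin 2 × Fin 2) × Fin 2, if q = ((g u, g v), g w) then (1:ℂ) else 0 :=
      Finset.sum_congr rfl fun q _ => by simp only [hiff q]
    rw [this, Finset.sum_ite_eq' Finset.univ (((g u, g v), g w) : (Fin 2 × Fin 2) × Fin 2)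
      (fun _ => (1:ℂ))]
    simp
  · push_neg at h
    obtain ⟨i, hu, hv, hw, hne⟩ := h
    have hL : (∏ i ∈ Finset.univ \ ({u, v, w} : Finset ι), if g i = f i then (1 : ℂ) else 0) = 0 := by
      refine Finset.prod_eq_zero (i := i) ?_ (if_neg hne)
      simp [hu, hv, hw]
    rw [hL]
    symm
    refine Finset.sum_eq_zero fun q _ => ?_
    rw [if_neg]
    intro hq
    apply hne
    rw [hq, Function.update_of_ne hw, Function.update_of_ne hv, Function.update_of_ne hu]

lemma tpow_F_apply {u v w : ι} (huv : u ≠ v) (huw : u ≠ w) (hvw : v ≠ w)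
    (P Q R : Matrix (Fin 2) (Fin 2) ℂ) (g f : ι → Fin 2) :
    tpow (fun i => if i = u then P else if i = v then Q else if i = w then R else 1) g f
      = P (g u) (f u) * Q (g v) (f v) * R (g w) (f w) *
          ∏ i ∈ Finset.univ \ ({u, v, w} : Finset ι), if g i = f i then (1 : ℂ) else 0 := by
  rw [tpow, Matrix.of_apply]
  have hsub : ({u, v, w} : Finset ι) ⊆ Finset.univ := Finset.subset_univ _
  rw [← Finset.prod_sdiff hsub]
  have huvw : u ∉ ({v, w} : Finset ι) := by simp [huv, huw]
  have hvw' : v ∉ ({w} : Finset ι) := by simp [hvw]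
  rw [show ({u, v, w} : Finset ι) = insert u (insert v {w}) from rfl,
    Finset.prod_insert huvw, Finset.prod_insert hvw', Finset.prod_singleton]
  have h1 : ∀ i ∈ Finset.univ \ ({u, v, w} : Finset ι),
      (if i = u then P else if i = v then Q else if i = w then R else 1) (g i) (f i)
        = if g i = f i then (1:ℂ) else 0 := by
    intro i hi
    simp only [Finset.mem_sdiff, Finset.mem_insert, Finset.mem_singleton] at hi
    push_neg at hi
    rw [if_neg hi.2.1, if_neg hi.2.2.1, if_neg hi.2.2.2, Matrix.one_apply]
  rw [Finset.prod_congr rfl h1]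
  simp only [Ne.symm huv, Ne.symm huw, Ne.symm hvw, if_true, if_false, eq_self_iff_true,
    ite_true, ite_false, if_neg (Ne.symm huv), if_neg (Ne.symm huw), if_neg (Ne.symm hvw)]
  ring

lemma trace_mul_T3 {u v w : ι} (huv : u ≠ v) (huw : u ≠ w) (hvw : v ≠ w)
    (ρ : Matrix (ι → Fin 2) (ι → Fin 2) ℂ) (P Q R : Matrix (Fin 2) (Fin 2) ℂ) :
    (ρ * T3 u v w P Q R).trace = ((rdm3 u v w ρ) * ((P ⊗ₖ Q) ⊗ₖ R)).trace := by
  have hupd : ∀ (f : ι → Fin 2) (q : (Fin 2 × Fin 2) × Fin 2),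
      (Function.update (Function.update (Function.update f u q.1.1) v q.1.2) w q.2) u = q.1.1
      ∧ (Function.update (Function.update (Function.update f u q.1.1) v q.1.2) w q.2) v = q.1.2
      ∧ (Function.update (Function.update (Function.update f u q.1.1) v q.1.2) w q.2) w = q.2 := by
    intro f q
    refine ⟨?_, ?_, ?_⟩
    · rw [Function.update_of_ne huw, Function.update_of_ne huv, Function.update_self]
    · rw [Function.update_of_ne hvw, Function.update_self]
    · rw [Function.update_self]
  -- LHS
  have hLHS : (ρ * T3 u v w P Q R).trace
      = ∑ f : ι → Fin 2, ∑ q : (Fin 2 × Fin 2) × Fin 2,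
          ρ f (Function.update (Function.update (Function.update f u q.1.1) v q.1.2) w q.2)
            * (P q.1.1 (f u) * Q q.1.2 (f v) * R q.2 (f w)) := by
    rw [T3_eq_tpow huv huw hvw, Matrix.trace]
    simp only [Matrix.diag_apply, Matrix.mul_apply]
    refine Finset.sum_congr rfl fun f _ => ?_
    have : ∀ g, tpow (fun i => if i = u then P else if i = v then Q else if i = w then R else 1) g f
        = P (g u) (f u) * Q (g v) (f v) * R (g w) (f w) *
          ∑ q : (Fin 2 × Fin 2) × Fin 2,
            if g = Function.update (Function.update (Function.update f u q.1.1) v q.1.2) w q.2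
            then 1 else 0 := by
      intro g
      rw [tpow_F_apply huv huw hvw, delta_prod_eq_sum u v w huv huw hvw]
    rw [Finset.sum_congr rfl fun g _ => by rw [this g]]
    have expand : ∀ g, ρ f g * (P (g u) (f u) * Q (g v) (f v) * R (g w) (f w) *
          ∑ q : (Fin 2 × Fin 2) × Fin 2,
            if g = Function.update (Function.update (Function.update f u q.1.1) v q.1.2) w q.2
            then 1 else 0)
        = ∑ q : (Fin 2 × Fin 2) × Fin 2,
            if g = Function.update (Function.update (Function.update f u q.1.1) v q.1.2) w q.2
            then ρ f g * (P (g u) (f u) * Q (g v) (f v) * R (g w) (f w)) else 0 := by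
      intro g
      rw [Finset.mul_sum, Finset.mul_sum]
      refine Finset.sum_congr rfl fun q _ => ?_
      split_ifs <;> ring
    rw [Finset.sum_congr rfl fun g _ => expand g, Finset.sum_comm]
    refine Finset.sum_congr rfl fun q _ => ?_
    rw [Finset.sum_ite_eq' Finset.univ]
    rw [if_pos (Finset.mem_univ _)]
    obtain ⟨h1, h2, h3⟩ := hupd f q
    rw [h1, h2, h3]
  -- RHS
  have hRHS : ((rdm3 u v w ρ) * ((P ⊗ₖ Q) ⊗ₖ R)).trace
      = ∑ g : ι → Fin 2, ∑ q : (Fin 2 × Fin 2) × Fin 2,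
          ρ g (Function.update (Function.update (Function.update g u q.1.1) v q.1.2) w q.2)
            * (P q.1.1 (g u) * Q q.1.2 (g v) * R q.2 (g w)) := by
    have step : ∀ q : (Fin 2 × Fin 2) × Fin 2,
        (∑ p : (Fin 2 × Fin 2) × Fin 2, rdm3 u v w ρ p q * ((P ⊗ₖ Q) ⊗ₖ R) q p)
        = ∑ g : ι → Fin 2,
            ρ g (Function.update (Function.update (Function.update g u q.1.1) v q.1.2) w q.2)
              * (P q.1.1 (g u) * Q q.1.2 (g v) * R q.2 (g w)) := by
      intro q
      simp only [rdm3, Matrix.of_apply, Finset.sum_mul, ite_mul, zero_mul]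
      rw [Finset.sum_comm]
      refine Finset.sum_congr rfl fun g _ => ?_
      have hc : ∀ p : (Fin 2 × Fin 2) × Fin 2,
          (g u = p.1.1 ∧ g v = p.1.2 ∧ g w = p.2) ↔ p = ((g u, g v), g w) := by
        intro p
        constructor
        · rintro ⟨h1, h2, h3⟩
          exact Prod.ext (Prod.ext h1.symm h2.symm) h3.symm
        · rintro rfl
          exact ⟨rfl, rfl, rfl⟩
      have hcol : (∑ p : (Fin 2 × Fin 2) × Fin 2,
          if g u = p.1.1 ∧ g v = p.1.2 ∧ g w = p.2 then
            ρ g (Function.update (Function.update (Function.update g u q.1.1) v q.1.2) w q.2)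
              * ((P ⊗ₖ Q) ⊗ₖ R) q p else 0)
          = ∑ p : (Fin 2 × Fin 2) × Fin 2,
            if p = ((g u, g v), g w) then
              ρ g (Function.update (Function.update (Function.update g u q.1.1) v q.1.2) w q.2)
                * ((P ⊗ₖ Q) ⊗ₖ R) q p else 0 :=
        Finset.sum_congr rfl fun p _ => by simp only [hc p]
      rw [hcol, Finset.sum_ite_eq' Finset.univ]
      simp only [Finset.mem_univ, if_true, Matrix.kroneckerMap_apply]
    rw [Matrix.trace]
    simp only [Matrix.diag_apply, Matrix.mul_apply]
    rw [Finset.sum_comm]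
    rw [Finset.sum_congr rfl fun q _ => step q]
    rw [Finset.sum_comm]
  rw [hLHS, hRHS]

end TraceLemma

section PauliFacts

lemma sp_mul_sz : σp * σz = -σp := by
  ext i j; fin_cases i <;> fin_cases j <;> norm_num [σp, σz, Matrix.mul_apply, Fin.sum_univ_two]

lemma sz_mul_sp : σz * σp = σp := by
  ext i j; fin_cases i <;> fin_cases j <;> norm_num [σp, σz, Matrix.mul_apply, Fin.sum_univ_two]

lemma sm_mul_sz : σm * σz = σm := by
  ext i j; fin_cases i <;> fin_cases j <;> norm_num [σm, σz, Matrix.mul_apply, Fin.sum_univ_two]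

lemma sz_mul_sm : σz * σm = -σm := by
  ext i j; fin_cases i <;> fin_cases j <;> norm_num [σm, σz, Matrix.mul_apply, Fin.sum_univ_two]

lemma sp_mul_sp : σp * σp = 0 := by
  ext i j; fin_cases i <;> fin_cases j <;> norm_num [σp, Matrix.mul_apply, Fin.sum_univ_two]

lemma sm_mul_sm : σm * σm = 0 := by
  ext i j; fin_cases i <;> fin_cases j <;> norm_num [σm, Matrix.mul_apply, Fin.sum_univ_two]

lemma spz_comm : σp * σz - σz * σp = (-2 : ℂ) • σp := by
  rw [sp_mul_sz, sz_mul_sp]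
  ext i j; fin_cases i <;> fin_cases j <;> norm_num [σp]

lemma smz_comm : σm * σz - σz * σm = (2 : ℂ) • σm := by
  rw [sm_mul_sz, sz_mul_sm]
  ext i j; fin_cases i <;> fin_cases j <;> norm_num [σm]

lemma spm_comm : σp * σm - σm * σp = σz := by
  ext i j; fin_cases i <;> fin_cases j <;> norm_num [σp, σm, σz, Matrix.mul_apply, Fin.sum_univ_two]

lemma smp_comm : σm * σp - σp * σm = -σz := by
  ext i j; fin_cases i <;> fin_cases j <;> norm_num [σp, σm, σz, Matrix.mul_apply, Fin.sum_univ_two]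

lemma trace_sx_sz : (σx * σz).trace = 0 := by
  norm_num [σx, σz, Matrix.trace_fin_two, Matrix.mul_apply, Fin.sum_univ_two]

lemma trace_sy_sz : (σy * σz).trace = 0 := by
  norm_num [σy, σz, Matrix.trace_fin_two, Matrix.mul_apply, Fin.sum_univ_two]

lemma trace_sz_sz : (σz * σz).trace = 2 := by
  norm_num [σz, Matrix.trace_fin_two, Matrix.mul_apply, Fin.sum_univ_two]

lemma trace_gibbs_sz (β ω : ℝ) :
    (gibbsQubit β ω * σz).trace = ((Real.tanh (β * ω / 2) : ℝ) : ℂ) := by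
  have hc : Real.cosh (β * ω / 2) ≠ 0 := (Real.cosh_pos _).ne'
  rw [gibbsQubit, smul_mul_assoc, Matrix.trace_smul]
  have h1 : (!![(Real.exp (β * ω / 2) : ℂ), 0; 0, (Real.exp (-(β * ω) / 2) : ℂ)] * σz).trace
      = ((Real.exp (β * ω / 2) : ℂ) - (Real.exp (-(β * ω) / 2) : ℂ)) := by
    norm_num [σz, Matrix.trace_fin_two, Matrix.mul_apply, Fin.sum_univ_two, sub_eq_add_neg]
  rw [h1]
  have hreal : (2 * Real.cosh (β * ω / 2))⁻¹ * (Real.exp (β * ω / 2) - Real.exp (-(β * ω) / 2))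
      = Real.tanh (β * ω / 2) := by
    rw [Real.tanh_eq_sinh_div_cosh, Real.sinh_eq, show (-(β * ω) / 2 : ℝ) = -(β * ω / 2) by ring]
    field_simp
  rw [smul_eq_mul, ← Complex.ofReal_sub, ← Complex.ofReal_inv, ← Complex.ofReal_mul, hreal]

end PauliFacts

section MoreT3
variable {ι : Type*} [Fintype ι] [DecidableEq ι]

lemma opAt_zero (u : ι) : opAt u (0 : Matrix (Fin 2) (Fin 2) ℂ) = 0 := by
  ext f g; simp [opAt_apply]

lemma T3_zero_right (u v w : ι) (P Q : Matrix (Fin 2) (Fin 2) ℂ) :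
    T3 u v w P Q (0 : Matrix (Fin 2) (Fin 2) ℂ) = 0 := by
  simp [T3, opAt_zero]

lemma T3_neg_right (u v w : ι) (P Q R : Matrix (Fin 2) (Fin 2) ℂ) :
    T3 u v w P Q (-R) = -T3 u v w P Q R := by
  have := T3_sub_right u v w P Q 0 R
  simpa [T3_zero_right] using this

lemma sp_mul_sm_mat : σp * σm = !![(1 : ℂ), 0; 0, 0] := by
  ext i j; fin_cases i <;> fin_cases j <;> norm_num [σp, σm, Matrix.mul_apply, Fin.sum_univ_two]

lemma sm_mul_sp_mat : σm * σp = !![(0 : ℂ), 0; 0, 1] := by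
  ext i j; fin_cases i <;> fin_cases j <;> norm_num [σp, σm, Matrix.mul_apply, Fin.sum_univ_two]

lemma sz_split : σz = !![(1 : ℂ), 0; 0, 0] - !![(0 : ℂ), 0; 0, 1] := by
  ext i j; fin_cases i <;> fin_cases j <;> norm_num [σz]

end MoreT3
/-- **decomposition of the cross term into intra- and intersystem coherence
contributions.** For qubits `A_m, A_k, B_l` (`m ≠ k`) with pair interactions
`H_{ml}, H_{kl}`, if the reduced state of `ρ` on the triple decomposes as
`ρ_{A_mA_kB_l} = ρ_{A_mA_k} ⊗ ρ_{B_l} + Σ_a χ^a_A ⊗ σᵃ_{B_l}` with `ρ_{B_l}` Gibbs and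
`tr χ^a_A = 0`, then
`-tr(ρ[H_{ml},[H_{kl},H_{B0}]]) = ω_{B_l}[tanh(β_{B_l}ω_{B_l}/2)·tr(ρ_{A_mA_k}K) + 2tr(χ^z_A K)]`,
where `K = c_{ml}c̄_{kl} σ⁻_{A_m}σ⁺_{A_k} + c̄_{ml}c_{kl} σ⁺_{A_m}σ⁻_{A_k}`. -/
theorem cross_term_coherence_decomposition
    (NA NB : ℕ) (m k : Fin NA) (hmk : m ≠ k) (l : Fin NB)
    (ωB : Fin NB → ℝ) (βBl : ℝ) (cml ckl : ℂ)
    (HB0 Hml Hkl : Matrix ((Fin NA ⊕ Fin NB) → Fin 2) ((Fin NA ⊕ Fin NB) → Fin 2) ℂ)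
    (hHB0 : HB0 = (-(1/2) : ℂ) • ∑ l', (ωB l' : ℂ) • opAt (Sum.inr l') σz)
    (hHml : Hml = cml • (opAt (Sum.inl m) σm * opAt (Sum.inr l) σp)
        + (starRingEnd ℂ) cml • (opAt (Sum.inl m) σp * opAt (Sum.inr l) σm))
    (hHkl : Hkl = ckl • (opAt (Sum.inl k) σm * opAt (Sum.inr l) σp)
        + (starRingEnd ℂ) ckl • (opAt (Sum.inl k) σp * opAt (Sum.inr l) σm))
    (ρ : Matrix ((Fin NA ⊕ Fin NB) → Fin 2) ((Fin NA ⊕ Fin NB) → Fin 2) ℂ)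
    (hρ : ρ.PosSemidef) (hρtr : ρ.trace = 1)
    (χ : Fin 3 → Matrix (Fin 2 × Fin 2) (Fin 2 × Fin 2) ℂ)
    (hχ : ∀ a, (χ a).trace = 0)
    (hdecomp : rdm3 (Sum.inl m) (Sum.inl k) (Sum.inr l) ρ
      = (rdm2 (Sum.inl m) (Sum.inl k) ρ) ⊗ₖ gibbsQubit βBl (ωB l)
        + ∑ a : Fin 3, (χ a) ⊗ₖ (![σx, σy, σz] a))
    (K : Matrix (Fin 2 × Fin 2) (Fin 2 × Fin 2) ℂ)
    (hK : K = (cml * (starRingEnd ℂ) ckl) • (σm ⊗ₖ σp)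
        + ((starRingEnd ℂ) cml * ckl) • (σp ⊗ₖ σm)) :
    -((ρ * ⁅Hml, ⁅Hkl, HB0⁆⁆).trace)
      = (ωB l : ℂ) *
          (((Real.tanh (βBl * ωB l / 2) : ℝ) : ℂ) * ((rdm2 (Sum.inl m) (Sum.inl k) ρ) * K).trace
            + 2 * ((χ 2) * K).trace) := by
  have huv : (Sum.inl m : Fin NA ⊕ Fin NB) ≠ Sum.inl k := fun h => hmk (Sum.inl.inj h)
  have huw : (Sum.inl m : Fin NA ⊕ Fin NB) ≠ Sum.inr l := Sum.inl_ne_inr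
  have hvw : (Sum.inl k : Fin NA ⊕ Fin NB) ≠ Sum.inr l := Sum.inl_ne_inr
  have hml' : Hml = cml • T3 (Sum.inl m) (Sum.inl k) (Sum.inr l) σm 1 σp
      + (starRingEnd ℂ) cml • T3 (Sum.inl m) (Sum.inl k) (Sum.inr l) σp 1 σm := by
    rw [hHml]; simp only [T3, opAt_one, mul_one]
  have hkl' : Hkl = ckl • T3 (Sum.inl m) (Sum.inl k) (Sum.inr l) 1 σm σp
      + (starRingEnd ℂ) ckl • T3 (Sum.inl m) (Sum.inl k) (Sum.inr l) 1 σp σm := by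
    rw [hHkl]; simp only [T3, opAt_one, one_mul]
  have hSl : opAt (Sum.inr l) σz
      = T3 (Sum.inl m) (Sum.inl k) (Sum.inr l) (1 : Matrix (Fin 2) (Fin 2) ℂ) 1 σz := by
    simp only [T3, opAt_one, one_mul]
  have hcomm : ∀ l' : Fin NB, l' ≠ l →
      Hkl * opAt (Sum.inr l') σz = opAt (Sum.inr l') σz * Hkl := by
    intro l' hl'
    have hx1 : (Sum.inr l' : Fin NA ⊕ Fin NB) ≠ Sum.inl m := Sum.inr_ne_inl
    have hx2 : (Sum.inr l' : Fin NA ⊕ Fin NB) ≠ Sum.inl k := Sum.inr_ne_inl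
    have hx3 : (Sum.inr l' : Fin NA ⊕ Fin NB) ≠ Sum.inr l := by simpa using hl'
    rw [hkl']
    rw [add_mul, mul_add, smul_mul_assoc, smul_mul_assoc, Matrix.mul_smul, Matrix.mul_smul,
      opAt_commute_T3 hx1 hx2 hx3, opAt_commute_T3 hx1 hx2 hx3]
  have hklS : Hkl * T3 (Sum.inl m) (Sum.inl k) (Sum.inr l) 1 1 σz
      - T3 (Sum.inl m) (Sum.inl k) (Sum.inr l) 1 1 σz * Hkl
      = (-2 * ckl) • T3 (Sum.inl m) (Sum.inl k) (Sum.inr l) 1 σm σp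
        + (2 * (starRingEnd ℂ) ckl) • T3 (Sum.inl m) (Sum.inl k) (Sum.inr l) 1 σp σm := by
    rw [hkl']
    simp only [add_mul, mul_add, smul_mul_assoc, Matrix.mul_smul, T3_mul huv huw hvw,
      one_mul, mul_one, sp_mul_sz, sz_mul_sp, sm_mul_sz, sz_mul_sm, T3_neg_right]
    module
  have hinner : ⁅Hkl, HB0⁆ = (ωB l : ℂ) •
      (ckl • T3 (Sum.inl m) (Sum.inl k) (Sum.inr l) 1 σm σp
        - (starRingEnd ℂ) ckl • T3 (Sum.inl m) (Sum.inl k) (Sum.inr l) 1 σp σm) := by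
    rw [Ring.lie_def, hHB0, Matrix.mul_smul, smul_mul_assoc, ← smul_sub,
      Finset.mul_sum, Finset.sum_mul, ← Finset.sum_sub_distrib]
    rw [Finset.sum_eq_single l (fun b _ hb => by
        rw [Matrix.mul_smul, smul_mul_assoc, hcomm b hb, sub_self])
      (fun h => absurd (Finset.mem_univ l) h)]
    rw [Matrix.mul_smul, smul_mul_assoc, ← smul_sub, hSl, hklS]
    module
  have houter : ⁅Hml, ⁅Hkl, HB0⁆⁆ = (ωB l : ℂ) •
      ((-(cml * (starRingEnd ℂ) ckl)) • T3 (Sum.inl m) (Sum.inl k) (Sum.inr l) σm σp σz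
        + (-((starRingEnd ℂ) cml * ckl)) • T3 (Sum.inl m) (Sum.inl k) (Sum.inr l) σp σm σz) := by
    rw [Ring.lie_def, hinner, hml']
    simp only [Matrix.mul_smul, smul_mul_assoc, mul_sub, sub_mul, add_mul, mul_add,
      smul_sub, smul_add, T3_mul huv huw hvw, one_mul, mul_one, sp_mul_sp, sm_mul_sm,
      T3_zero_right, sp_mul_sm_mat, sm_mul_sp_mat, smul_zero, sub_zero, zero_sub, add_zero,
      zero_add]
    rw [sz_split]
    simp only [T3_sub_right]
    module
  rw [houter]
  simp only [Matrix.mul_smul, Matrix.mul_add, Matrix.trace_smul, Matrix.trace_add, smul_eq_mul]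
  rw [trace_mul_T3 huv huw hvw ρ σm σp σz, trace_mul_T3 huv huw hvw ρ σp σm σz, hdecomp]
  simp only [Matrix.add_mul, Matrix.trace_add, Finset.sum_mul, Matrix.trace_sum,
    Fin.sum_univ_three, ← Matrix.mul_kronecker_mul, Matrix.trace_kronecker,
    Matrix.cons_val_zero, Matrix.cons_val_one, Matrix.head_cons, Matrix.cons_val_two,
    Matrix.tail_cons]
  rw [trace_gibbs_sz, trace_sx_sz, trace_sy_sz, trace_sz_sz]
  rw [hK]
  simp only [Matrix.mul_add, Matrix.mul_smul, Matrix.trace_add, Matrix.trace_smul, smul_eq_mul]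
  ring
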